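/- Let φ : 𝕋 → ℂ be measurable with |φ| < 1 a.e., w measurable not a.e. zero with ∫|log|w|| dm < ∞, and suppose that for some p > 2, ∑_{n=0}^∞ (∫_𝕋 |w|² |φ|^{2n} dm)^{p/2} < ∞. Then ∫_𝕋 log(1/(1 − |φ|)) dm < ∞. -/

import Mathlib

open MeasureTheory Real
open scoped ENNReal NNReal
set_option maxHeartbeats 1000000

instance : Fact (0 < 2 * Real.pi) := ⟨by positivity⟩

noncomputable def circleHaar : Measure (AddCircle (2 * Real.pi)) := AddCircle.haarAddCircle

lemma series_bound {α : ℝ} (hα0 : 0 < α) (hα1 : α < 1) {t : ℝ} (ht0 : 0 ≤ t) (ht1 : t < 1) :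
    (1 - t) ^ (-α) ≤ 2 + Real.exp 4 * ∑' n : ℕ, ((n : ℝ) + 1) ^ (-(1 - α)) * t ^ (n + 1) := by
  have h1t : 0 < 1 - t := by linarith
  have hnn : ∀ n : ℕ, 0 ≤ ((n : ℝ) + 1) ^ (-(1 - α)) * t ^ (n + 1) := by
    intro n
    exact mul_nonneg (Real.rpow_nonneg (by positivity) _) (pow_nonneg ht0 _)
  have hS : Summable (fun n : ℕ => ((n : ℝ) + 1) ^ (-(1 - α)) * t ^ (n + 1)) := by
    refine Summable.of_nonneg_of_le hnn (fun n => ?_)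
      (((summable_geometric_of_lt_one ht0 ht1).mul_left t).congr (fun n => (pow_succ' t n).symm))
    have h1 : ((n : ℝ) + 1) ^ (-(1 - α)) ≤ 1 := by
      apply Real.rpow_le_one_of_one_le_of_nonpos
      · linarith [Nat.cast_nonneg (α := ℝ) n]
      · linarith
    calc ((n : ℝ) + 1) ^ (-(1 - α)) * t ^ (n + 1) ≤ 1 * t ^ (n + 1) :=
          mul_le_mul_of_nonneg_right h1 (pow_nonneg ht0 _)
      _ = t ^ (n + 1) := one_mul _
  have hSnn : 0 ≤ ∑' n : ℕ, ((n : ℝ) + 1) ^ (-(1 - α)) * t ^ (n + 1) := tsum_nonneg hnn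
  rcases le_or_gt t (1/2) with hth | hth
  · have h2 : (1 - t) ^ (-α) ≤ (2:ℝ) := by
      have hhalf : (1/2 : ℝ) ≤ 1 - t := by linarith
      calc (1 - t) ^ (-α) ≤ (1/2 : ℝ) ^ (-α) :=
            Real.rpow_le_rpow_of_nonpos (by norm_num) hhalf (by linarith)
        _ = 2 ^ α := by
            rw [one_div, Real.inv_rpow (by norm_num), Real.rpow_neg (by norm_num), inv_inv]
        _ ≤ 2 ^ (1:ℝ) := Real.rpow_le_rpow_of_exponent_le (by norm_num) (by linarith)
        _ = 2 := Real.rpow_one 2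
    have : 0 ≤ Real.exp 4 * ∑' n : ℕ, ((n : ℝ) + 1) ^ (-(1 - α)) * t ^ (n + 1) :=
      mul_nonneg (Real.exp_nonneg 4) hSnn
    linarith
  · have ht0' : 0 < t := by linarith
    set N : ℕ := ⌈(1 - t)⁻¹⌉₊ with hNdef
    have hinv0 : 0 < (1 - t)⁻¹ := by positivity
    have hinv1 : (1:ℝ) ≤ (1 - t)⁻¹ := (one_le_inv_iff₀.mpr ⟨h1t, by linarith⟩)
    have hN1 : (1 - t)⁻¹ ≤ (N : ℝ) := Nat.le_ceil _
    have hNpos : 0 < (N : ℝ) := lt_of_lt_of_le hinv0 hN1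
    have hN2 : (N : ℝ) ≤ 2 * (1 - t)⁻¹ := by
      have := (Nat.ceil_lt_add_one hinv0.le : (N : ℝ) < (1 - t)⁻¹ + 1)
      linarith
    -- lower bound on t ^ N
    have hlogt : -(2 * (1 - t)) ≤ Real.log t := by
      have h := Real.log_le_sub_one_of_pos (inv_pos.mpr ht0' : (0:ℝ) < t⁻¹)
      rw [Real.log_inv] at h
      have hmul : t * t⁻¹ = 1 := mul_inv_cancel₀ (ne_of_gt ht0')
      have : t⁻¹ - 1 ≤ 2 * (1 - t) := by
        nlinarith [hmul, mul_nonneg (by linarith : (0:ℝ) ≤ 2*t-1) (by linarith : (0:ℝ) ≤ 1-t)]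
      linarith
    have htN : Real.exp (-4) ≤ t ^ N := by
      have h1 : t ^ N = Real.exp ((N : ℝ) * Real.log t) := by
        rw [← Real.log_pow, Real.exp_log (pow_pos ht0' N)]
      rw [h1]
      apply Real.exp_le_exp.mpr
      have h2 : (N : ℝ) * -(2 * (1 - t)) ≤ (N : ℝ) * Real.log t :=
        mul_le_mul_of_nonneg_left hlogt hNpos.le
      have h4 : (N : ℝ) * (1 - t) ≤ 2 := by
        have := mul_le_mul_of_nonneg_right hN2 h1t.le
        have he : 2 * (1 - t)⁻¹ * (1 - t) = 2 := by field_simp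
        linarith
      nlinarith
    -- partial sum lower bound
    have hterm : ∀ n ∈ Finset.range N, (N : ℝ) ^ (-(1 - α)) * t ^ N ≤
        ((n : ℝ) + 1) ^ (-(1 - α)) * t ^ (n + 1) := by
      intro n hn
      have hnN : (n : ℕ) + 1 ≤ N := Nat.succ_le_of_lt (Finset.mem_range.mp hn)
      have h1 : (N : ℝ) ^ (-(1 - α)) ≤ ((n : ℝ) + 1) ^ (-(1 - α)) := by
        apply Real.rpow_le_rpow_of_nonpos (by positivity) ?_ (by linarith)
        exact_mod_cast Nat.cast_le.mpr hnN
      have h2 : t ^ N ≤ t ^ (n + 1) := pow_le_pow_of_le_one ht0 ht1.le hnN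
      exact mul_le_mul h1 h2 (pow_nonneg ht0 _) (Real.rpow_nonneg (by positivity) _)
    have hpart : (N : ℝ) * ((N : ℝ) ^ (-(1 - α)) * t ^ N) ≤
        ∑ n ∈ Finset.range N, ((n : ℝ) + 1) ^ (-(1 - α)) * t ^ (n + 1) := by
      have := Finset.card_nsmul_le_sum (Finset.range N)
        (fun n => ((n : ℝ) + 1) ^ (-(1 - α)) * t ^ (n + 1)) ((N : ℝ) ^ (-(1 - α)) * t ^ N) hterm
      simpa [Finset.card_range, nsmul_eq_mul] using this
    have htsum : ∑ n ∈ Finset.range N, ((n : ℝ) + 1) ^ (-(1 - α)) * t ^ (n + 1) ≤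
        ∑' n : ℕ, ((n : ℝ) + 1) ^ (-(1 - α)) * t ^ (n + 1) :=
      Summable.sum_le_tsum _ (fun n _ => hnn n) hS
    have hNα : (1 - t) ^ (-α) ≤ (N : ℝ) ^ α := by
      calc (1 - t) ^ (-α) = ((1 - t)⁻¹) ^ α := by
            rw [← Real.rpow_neg_one (1-t), ← Real.rpow_mul h1t.le]
            ring_nf
        _ ≤ (N : ℝ) ^ α := Real.rpow_le_rpow hinv0.le hN1 hα0.le
    have h1 : (N : ℝ) * (N : ℝ) ^ (-(1 - α)) = (N : ℝ) ^ α := by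
      calc (N : ℝ) * (N : ℝ) ^ (-(1 - α)) = (N : ℝ) ^ ((1:ℝ) + -(1 - α)) := by
            rw [Real.rpow_add hNpos, Real.rpow_one]
        _ = (N : ℝ) ^ α := by ring_nf
    have hstep : (N : ℝ) ^ α * Real.exp (-4) ≤
        ∑' n : ℕ, ((n : ℝ) + 1) ^ (-(1 - α)) * t ^ (n + 1) := by
      refine le_trans (le_trans ?_ hpart) htsum
      rw [← mul_assoc, h1]
      exact mul_le_mul_of_nonneg_left htN (Real.rpow_nonneg hNpos.le _)
    have hfin : (1 - t) ^ (-α) ≤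
        Real.exp 4 * ∑' n : ℕ, ((n : ℝ) + 1) ^ (-(1 - α)) * t ^ (n + 1) := by
      calc (1 - t) ^ (-α) ≤ (N : ℝ) ^ α := hNα
        _ = Real.exp 4 * ((N : ℝ) ^ α * Real.exp (-4)) := by
            rw [← mul_assoc, mul_comm (Real.exp 4), mul_assoc, ← Real.exp_add]
            norm_num
        _ ≤ Real.exp 4 * ∑' n : ℕ, ((n : ℝ) + 1) ^ (-(1 - α)) * t ^ (n + 1) :=
            mul_le_mul_of_nonneg_left hstep (Real.exp_nonneg 4)
    linarith

lemma series_summable {α : ℝ} (hα1 : α < 1) {t : ℝ} (ht0 : 0 ≤ t) (ht1 : t < 1) :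
    Summable (fun n : ℕ => ((n : ℝ) + 1) ^ (-(1 - α)) * t ^ (n + 1)) := by
  refine Summable.of_nonneg_of_le
    (fun n => mul_nonneg (Real.rpow_nonneg (by positivity) _) (pow_nonneg ht0 _)) (fun n => ?_)
    (((summable_geometric_of_lt_one ht0 ht1).mul_left t).congr (fun n => (pow_succ' t n).symm))
  have h1 : ((n : ℝ) + 1) ^ (-(1 - α)) ≤ 1 := by
    apply Real.rpow_le_one_of_one_le_of_nonpos
    · linarith [Nat.cast_nonneg (α := ℝ) n]
    · linarith
  calc ((n : ℝ) + 1) ^ (-(1 - α)) * t ^ (n + 1) ≤ 1 * t ^ (n + 1) :=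
        mul_le_mul_of_nonneg_right h1 (pow_nonneg ht0 _)
    _ = t ^ (n + 1) := one_mul _

theorem stmt_8 (φ w : AddCircle (2 * Real.pi) → ℂ)
    (hφm : Measurable φ) (hwm : Measurable w)
    (hφ : ∀ᵐ x ∂circleHaar, ‖φ x‖ < 1)
    (hw0 : ∀ᵐ x ∂circleHaar, w x ≠ 0)
    (hw2 : Integrable (fun x => ‖w x‖ ^ 2) circleHaar)
    (hlogw : Integrable (fun x => |Real.log ‖w x‖|) circleHaar)
    (p : ℝ) (hp : 2 < p)
    (hsum : Summable (fun n : ℕ =>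
      (∫ x, ‖w x‖ ^ 2 * ‖φ x‖ ^ (2 * n) ∂circleHaar) ^ (p / 2))) :
    Integrable (fun x => Real.log (1 / (1 - ‖φ x‖))) circleHaar := by
  have hp0 : (0:ℝ) < p := by linarith
  set α : ℝ := 1 / p with hαdef
  have hα0 : 0 < α := by positivity
  have hα1 : α < 1 := by rw [hαdef, div_lt_one hp0]; linarith
  set b : ℕ → ℝ := fun n => ∫ x, ‖w x‖ ^ 2 * ‖φ x‖ ^ (2 * n) ∂circleHaar with hbdef
  have hsum' : Summable (fun n : ℕ => b n ^ (p / 2)) := hsum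
  have hφn : Measurable fun x => ‖φ x‖ := hφm.norm
  have hwn : Measurable fun x => ‖w x‖ := hwm.norm
  -- integrability of the terms
  have hint : ∀ n : ℕ, Integrable (fun x => ‖w x‖ ^ 2 * ‖φ x‖ ^ (2 * n)) circleHaar := by
    intro n
    refine hw2.mono' ((hwn.pow_const 2).mul (hφn.pow_const (2 * n))).aestronglyMeasurable ?_
    filter_upwards [hφ] with x hx
    have h1 : ‖φ x‖ ^ (2 * n) ≤ 1 := pow_le_one₀ (norm_nonneg _) hx.le
    have h2 : (0:ℝ) ≤ ‖w x‖ ^ 2 * ‖φ x‖ ^ (2 * n) := by positivity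
    rw [Real.norm_eq_abs, abs_of_nonneg h2]
    calc ‖w x‖ ^ 2 * ‖φ x‖ ^ (2 * n) ≤ ‖w x‖ ^ 2 * 1 :=
          mul_le_mul_of_nonneg_left h1 (by positivity)
      _ = ‖w x‖ ^ 2 := mul_one _
  have hbnn : ∀ n, 0 ≤ b n := fun n => integral_nonneg (fun x => by positivity)
  -- Step A: summability of the weighted series
  have hA : Summable (fun n : ℕ => ((n : ℝ) + 1) ^ (-(1 - α)) * b (n + 1)) := by
    have hr : (1:ℝ) < p / 2 := by linarith
    have hconj : (p / 2).HolderConjugate ((p/2) / (p/2 - 1)) :=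
      Real.HolderConjugate.conjExponent hr
    have hq1 : (1:ℝ) ≤ (p/2) / (p/2 - 1) := hconj.symm.lt.le
    have hexp : -(1 - α) * ((p/2) / (p/2 - 1)) < -1 := by
      rw [hαdef]
      have e1 : (1 - 1/p) * ((p/2) / (p/2 - 1)) = (p-1)/(p-2) := by
        field_simp
      rw [neg_mul, e1, neg_lt_neg_iff, lt_div_iff₀ (by linarith : (0:ℝ) < p - 2)]
      linarith
    have hs1 : Summable (fun n : ℕ => ((n : ℝ) + 1) ^ (-(1 - α) * ((p/2) / (p/2 - 1)))) := by
      have := (summable_nat_add_iff 1).mpr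
        (Real.summable_nat_rpow.mpr hexp)
      refine this.congr (fun n => ?_)
      push_cast
      ring_nf
    have hs2 : Summable (fun n : ℕ => b (n + 1) ^ (p / 2)) :=
      (summable_nat_add_iff 1).mpr hsum'
    refine Summable.of_nonneg_of_le
      (fun n => mul_nonneg (Real.rpow_nonneg (by positivity) _) (hbnn _))
      (fun n => ?_) (hs2.add hs1)
    have hc0 : (0:ℝ) ≤ ((n : ℝ) + 1) ^ (-(1 - α)) := Real.rpow_nonneg (by positivity) _
    have hy := Real.young_inequality_of_nonneg (hbnn (n+1)) hc0 hconj
    have h1 : b (n + 1) ^ (p/2) / (p/2) ≤ b (n + 1) ^ (p/2) :=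
      div_le_self (Real.rpow_nonneg (hbnn _) _) hr.le
    have h2 : (((n : ℝ) + 1) ^ (-(1 - α))) ^ ((p/2) / (p/2 - 1)) / ((p/2) / (p/2 - 1)) ≤
        (((n : ℝ) + 1) ^ (-(1 - α))) ^ ((p/2) / (p/2 - 1)) :=
      div_le_self (Real.rpow_nonneg hc0 _) hq1
    have h3 : (((n : ℝ) + 1) ^ (-(1 - α))) ^ ((p/2) / (p/2 - 1)) =
        ((n : ℝ) + 1) ^ (-(1 - α) * ((p/2) / (p/2 - 1))) :=
      (Real.rpow_mul (by positivity) _ _).symm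
    rw [mul_comm]
    calc b (n+1) * (((n : ℝ) + 1) ^ (-(1 - α)))
        ≤ b (n+1) ^ (p/2) / (p/2) +
          (((n : ℝ) + 1) ^ (-(1 - α))) ^ ((p/2) / (p/2 - 1)) / ((p/2) / (p/2 - 1)) := hy
      _ ≤ b (n+1) ^ (p/2) + ((n : ℝ) + 1) ^ (-(1 - α) * ((p/2) / (p/2 - 1))) := by
          rw [← h3]; exact add_le_add h1 h2
  -- Step B : integrability of the weight function F
  set F : AddCircle (2 * Real.pi) → ℝ := fun x => ‖w x‖ ^ 2 * (1 - ‖φ x‖ ^ 2) ^ (-α) with hFdef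
  have hFm : Measurable F := by
    apply (hwn.pow_const 2).mul
    measurability
  have hFnn : 0 ≤ᵐ[circleHaar] F := by
    filter_upwards [hφ] with x hx
    have h1 : (0:ℝ) < 1 - ‖φ x‖ ^ 2 := by nlinarith [norm_nonneg (φ x)]
    exact mul_nonneg (by positivity) (Real.rpow_nonneg h1.le _)
  have hF : Integrable F circleHaar := by
    refine ⟨hFm.aestronglyMeasurable, ?_⟩
    rw [hasFiniteIntegral_iff_ofReal hFnn]
    set g : ℕ → AddCircle (2 * Real.pi) → ℝ≥0∞ := fun n x =>
      ENNReal.ofReal ((Real.exp 4 * ((n : ℝ) + 1) ^ (-(1 - α))) *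
        (‖w x‖ ^ 2 * ‖φ x‖ ^ (2 * (n + 1)))) with hgdef
    have hcnn : ∀ n : ℕ, 0 ≤ Real.exp 4 * ((n : ℝ) + 1) ^ (-(1 - α)) := fun n =>
      mul_nonneg (Real.exp_nonneg 4) (Real.rpow_nonneg (by positivity) _)
    have hgm : ∀ n, Measurable (g n) := fun n =>
      (((hwn.pow_const 2).mul (hφn.pow_const (2 * (n + 1)))).const_mul _).ennreal_ofReal
    have hbound : ∀ᵐ x ∂circleHaar,
        ENNReal.ofReal (F x) ≤ ENNReal.ofReal (2 * ‖w x‖ ^ 2) + ∑' n, g n x := by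
      filter_upwards [hφ] with x hx
      have ht0 : (0:ℝ) ≤ ‖φ x‖ ^ 2 := sq_nonneg _
      have ht1 : ‖φ x‖ ^ 2 < 1 := by nlinarith [norm_nonneg (φ x)]
      have hs := series_summable (t := ‖φ x‖ ^ 2) hα1 ht0 ht1
      have hser := series_bound (t := ‖φ x‖ ^ 2) hα0 hα1 ht0 ht1
      have hu : (0:ℝ) ≤ ‖w x‖ ^ 2 := sq_nonneg _
      have hF1 : F x ≤ 2 * ‖w x‖ ^ 2 + ∑' n : ℕ,
          (Real.exp 4 * ((n : ℝ) + 1) ^ (-(1 - α))) * (‖w x‖ ^ 2 * ‖φ x‖ ^ (2 * (n + 1))) := by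
        have h2 := mul_le_mul_of_nonneg_left hser hu
        calc F x ≤ ‖w x‖ ^ 2 *
              (2 + Real.exp 4 * ∑' n : ℕ, ((n : ℝ) + 1) ^ (-(1 - α)) * (‖φ x‖ ^ 2) ^ (n + 1)) := h2
          _ = 2 * ‖w x‖ ^ 2 + ∑' n : ℕ,
              (Real.exp 4 * ((n : ℝ) + 1) ^ (-(1 - α))) * (‖w x‖ ^ 2 * ‖φ x‖ ^ (2 * (n + 1))) := by
              rw [mul_add, mul_comm (‖w x‖ ^ 2) 2, ← mul_assoc, ← tsum_mul_left]
              congr 1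
              exact tsum_congr fun n => by rw [pow_mul]; ring
      have hterm_nn : ∀ n : ℕ, 0 ≤
          (Real.exp 4 * ((n : ℝ) + 1) ^ (-(1 - α))) * (‖w x‖ ^ 2 * ‖φ x‖ ^ (2 * (n + 1))) :=
        fun n => mul_nonneg (hcnn n) (mul_nonneg hu (by positivity))
      have hsum2 : Summable (fun n : ℕ =>
          (Real.exp 4 * ((n : ℝ) + 1) ^ (-(1 - α))) * (‖w x‖ ^ 2 * ‖φ x‖ ^ (2 * (n + 1)))) := by
        refine ((hs.mul_left (Real.exp 4 * ‖w x‖ ^ 2)).congr (fun n => ?_))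
        rw [pow_mul]
        ring
      calc ENNReal.ofReal (F x) ≤ ENNReal.ofReal (2 * ‖w x‖ ^ 2 + ∑' n : ℕ,
            (Real.exp 4 * ((n : ℝ) + 1) ^ (-(1 - α))) * (‖w x‖ ^ 2 * ‖φ x‖ ^ (2 * (n + 1)))) :=
            ENNReal.ofReal_le_ofReal hF1
        _ = ENNReal.ofReal (2 * ‖w x‖ ^ 2) + ENNReal.ofReal (∑' n : ℕ,
            (Real.exp 4 * ((n : ℝ) + 1) ^ (-(1 - α))) * (‖w x‖ ^ 2 * ‖φ x‖ ^ (2 * (n + 1)))) :=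
            ENNReal.ofReal_add (by positivity) (tsum_nonneg hterm_nn)
        _ = ENNReal.ofReal (2 * ‖w x‖ ^ 2) + ∑' n, g n x := by
            rw [ENNReal.ofReal_tsum_of_nonneg hterm_nn hsum2]
    have h2 : ∀ n : ℕ, ∫⁻ x, g n x ∂circleHaar =
        ENNReal.ofReal (Real.exp 4 * ((n : ℝ) + 1) ^ (-(1 - α))) * ENNReal.ofReal (b (n + 1)) := by
      intro n
      have e1 : ∀ x, g n x = ENNReal.ofReal (Real.exp 4 * ((n : ℝ) + 1) ^ (-(1 - α))) *
          ENNReal.ofReal (‖w x‖ ^ 2 * ‖φ x‖ ^ (2 * (n + 1))) := fun x =>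
        ENNReal.ofReal_mul (hcnn n)
      simp_rw [e1]
      rw [lintegral_const_mul' _ _ ENNReal.ofReal_ne_top]
      congr 1
      rw [← ofReal_integral_eq_lintegral_ofReal (hint (n + 1))
        (Filter.Eventually.of_forall fun x => by positivity)]
    have h3 : (∑' n : ℕ, ∫⁻ x, g n x ∂circleHaar) < ⊤ := by
      have e2 : ∀ n : ℕ, ENNReal.ofReal (Real.exp 4 * ((n : ℝ) + 1) ^ (-(1 - α))) *
          ENNReal.ofReal (b (n + 1)) =
          ENNReal.ofReal (Real.exp 4 * (((n : ℝ) + 1) ^ (-(1 - α)) * b (n + 1))) := fun n => by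
        rw [← ENNReal.ofReal_mul (hcnn n), mul_assoc]
      simp_rw [h2, e2]
      rw [← ENNReal.ofReal_tsum_of_nonneg
        (fun n => mul_nonneg (Real.exp_nonneg 4)
          (mul_nonneg (Real.rpow_nonneg (by positivity) _) (hbnn _)))
        (hA.mul_left _)]
      exact ENNReal.ofReal_lt_top
    have h1 : (∫⁻ x, ENNReal.ofReal (2 * ‖w x‖ ^ 2) ∂circleHaar) < ⊤ := by
      rw [← ofReal_integral_eq_lintegral_ofReal (hw2.const_mul 2)
        (Filter.Eventually.of_forall fun x => by positivity)]
      exact ENNReal.ofReal_lt_top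
    calc (∫⁻ x, ENNReal.ofReal (F x) ∂circleHaar)
        ≤ ∫⁻ x, (ENNReal.ofReal (2 * ‖w x‖ ^ 2) + ∑' n, g n x) ∂circleHaar :=
          lintegral_mono_ae hbound
      _ = (∫⁻ x, ENNReal.ofReal (2 * ‖w x‖ ^ 2) ∂circleHaar) +
          ∫⁻ x, (∑' n, g n x) ∂circleHaar :=
          lintegral_add_left ((hwn.pow_const 2).const_mul 2).ennreal_ofReal _
      _ = (∫⁻ x, ENNReal.ofReal (2 * ‖w x‖ ^ 2) ∂circleHaar) +
          ∑' n, ∫⁻ x, g n x ∂circleHaar := by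
          rw [lintegral_tsum (fun n => (hgm n).aemeasurable)]
      _ < ⊤ := ENNReal.add_lt_top.mpr ⟨h1, h3⟩
  -- Step C : conclusion
  have hG : Integrable (fun x => (2 / α) * (F x + |Real.log ‖w x‖|)) circleHaar :=
    (hF.add hlogw).const_mul _
  refine hG.mono' ?_ ?_
  · exact (Real.measurable_log.comp
      (measurable_const.div (measurable_const.sub hφn))).aestronglyMeasurable
  · filter_upwards [hφ, hw0] with x hx1 hx2
    have hs0 : (0:ℝ) ≤ ‖φ x‖ := norm_nonneg _
    have h1s : (0:ℝ) < 1 - ‖φ x‖ := by linarith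
    have hwpos : (0:ℝ) < ‖w x‖ := norm_pos_iff.mpr hx2
    have hu : (0:ℝ) < ‖w x‖ ^ 2 := by positivity
    have hLdef : Real.log (1 / (1 - ‖φ x‖)) = -Real.log (1 - ‖φ x‖) := by
      rw [one_div, Real.log_inv]
    have hL0 : 0 ≤ Real.log (1 / (1 - ‖φ x‖)) := by
      rw [hLdef, neg_nonneg]
      exact Real.log_nonpos (by linarith) (by linarith)
    have hrpos : (0:ℝ) < (1 - ‖φ x‖) ^ (-α) := Real.rpow_pos_of_pos h1s _
    have hX : (0:ℝ) < ‖w x‖ ^ 2 * (1 - ‖φ x‖) ^ (-α) := mul_pos hu hrpos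
    have hlog1 : Real.log (‖w x‖ ^ 2 * (1 - ‖φ x‖) ^ (-α)) =
        Real.log (‖w x‖ ^ 2) + α * Real.log (1 / (1 - ‖φ x‖)) := by
      rw [Real.log_mul (ne_of_gt hu) (ne_of_gt hrpos), Real.log_rpow h1s, hLdef]
      ring
    have hαL : α * Real.log (1 / (1 - ‖φ x‖)) ≤
        ‖w x‖ ^ 2 * (1 - ‖φ x‖) ^ (-α) + |Real.log (‖w x‖ ^ 2)| := by
      have h := Real.log_le_sub_one_of_pos hX
      rw [hlog1] at h
      have h2 := neg_abs_le (Real.log (‖w x‖ ^ 2))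
      linarith
    have h2s : (0:ℝ) < 1 - ‖φ x‖ ^ 2 := by nlinarith
    have hcmp : (1 - ‖φ x‖) ^ (-α) ≤ 2 * (1 - ‖φ x‖ ^ 2) ^ (-α) := by
      have h3 : (1 - ‖φ x‖ ^ 2) / 2 ≤ 1 - ‖φ x‖ := by nlinarith
      have h4 : (1 - ‖φ x‖) ^ (-α) ≤ ((1 - ‖φ x‖ ^ 2) / 2) ^ (-α) :=
        Real.rpow_le_rpow_of_nonpos (by positivity) h3 (by linarith)
      have h5 : ((1 - ‖φ x‖ ^ 2) / 2) ^ (-α) = (1 - ‖φ x‖ ^ 2) ^ (-α) * (2:ℝ) ^ α := by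
        rw [Real.div_rpow h2s.le (by norm_num), Real.rpow_neg (by norm_num : (0:ℝ) ≤ 2),
          div_inv_eq_mul]
      have h6 : (2:ℝ) ^ α ≤ 2 := by
        calc (2:ℝ) ^ α ≤ 2 ^ (1:ℝ) := Real.rpow_le_rpow_of_exponent_le (by norm_num) hα1.le
          _ = 2 := Real.rpow_one 2
      calc (1 - ‖φ x‖) ^ (-α) ≤ (1 - ‖φ x‖ ^ 2) ^ (-α) * (2:ℝ) ^ α := h5 ▸ h4
        _ ≤ (1 - ‖φ x‖ ^ 2) ^ (-α) * 2 :=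
            mul_le_mul_of_nonneg_left h6 (Real.rpow_nonneg h2s.le _)
        _ = 2 * (1 - ‖φ x‖ ^ 2) ^ (-α) := mul_comm _ _
    have habs : |Real.log (‖w x‖ ^ 2)| = 2 * |Real.log ‖w x‖| := by
      rw [Real.log_pow]
      push_cast
      rw [abs_mul, abs_two]
    have hFx : ‖w x‖ ^ 2 * (1 - ‖φ x‖) ^ (-α) ≤ 2 * F x := by
      have h7 := mul_le_mul_of_nonneg_left hcmp hu.le
      calc ‖w x‖ ^ 2 * (1 - ‖φ x‖) ^ (-α)
          ≤ ‖w x‖ ^ 2 * (2 * (1 - ‖φ x‖ ^ 2) ^ (-α)) := h7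
        _ = 2 * F x := by rw [hFdef]; ring
    have hfinal : α * Real.log (1 / (1 - ‖φ x‖)) ≤ 2 * F x + 2 * |Real.log ‖w x‖| := by
      rw [habs] at hαL
      linarith
    rw [Real.norm_eq_abs, abs_of_nonneg hL0, div_mul_eq_mul_div, le_div_iff₀ hα0, mul_comm]
    linarith
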